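/- Let 𝒫₂ ⊊ 𝒫₁ be sets of prime numbers (𝒫₂ a proper subset of 𝒫₁) and let Cᵢ = ℤ[𝒫ᵢ⁻¹] be the subring of ℚ generated by {1/p : p ∈ 𝒫ᵢ}, regarded as an additive abelian group. Then every automorphism φ of the additive group C₁ × C₂ is of the form φ(a,b) = (c·a + e·b, d·b) for some unit c of the ring C₁, some element e ∈ C₁, and some unit d of the ring C₂ (with products taken in ℚ). -/

import Mathlib

/-- The subring `ℤ[𝒫⁻¹]` of `ℚ` generated by the inverses of the primes in `𝒫`. -/
noncomputable def PRing (P : Set ℕ) : Subring ℚ :=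
  Subring.closure {x : ℚ | ∃ p ∈ P, x = (p : ℚ)⁻¹}

lemma hom_eq_mul_one (C : Subring ℚ) (ψ : ↥C →+ ℚ) (x : ↥C) :
    ψ x = (x : ℚ) * ψ 1 := by
  have hden : ((x : ℚ).den : ℚ) ≠ 0 := by exact_mod_cast (x : ℚ).den_nz
  have hnum : (((x : ℚ).num : ℚ)) = (x : ℚ) * ((x : ℚ).den : ℚ) :=
    (div_eq_iff hden).mp (Rat.num_div_den _)
  have hkey : (((x : ℚ).den : ℤ) • x : ↥C) = ((x : ℚ).num • (1 : ↥C)) := by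
    ext
    simp [zsmul_eq_mul]
  have h2 := congrArg ψ hkey
  rw [map_zsmul, map_zsmul] at h2
  simp only [zsmul_eq_mul, Int.cast_natCast] at h2
  have h3 : ((x : ℚ).den : ℚ) * ψ x = ((x : ℚ).den : ℚ) * ((x : ℚ) * ψ 1) := by
    rw [h2, hnum]; ring
  exact mul_left_cancel₀ hden h3

lemma den_not_dvd (P : Set ℕ) (hP : ∀ p ∈ P, p.Prime) {q : ℕ} (hq : q.Prime) (hqP : q ∉ P)
    {x : ℚ} (hx : x ∈ PRing P) : ¬ q ∣ x.den := by
  induction hx using Subring.closure_induction with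
  | mem y hy =>
    obtain ⟨p, hpP, rfl⟩ := hy
    rw [Rat.inv_natCast_den_of_pos (hP p hpP).pos]
    exact fun h => hqP (((Nat.prime_dvd_prime_iff_eq hq (hP p hpP)).mp h) ▸ hpP)
  | zero => simp [hq.ne_one]
  | one => simp [hq.ne_one]
  | add x y hx hy ihx ihy =>
    exact fun h => (hq.dvd_mul.mp (h.trans (Rat.add_den_dvd x y))).elim ihx ihy
  | neg x hx ih => rwa [Rat.den_neg_eq_den]
  | mul x y hx hy ihx ihy =>
    exact fun h => (hq.dvd_mul.mp (h.trans (Rat.mul_den_dvd x y))).elim ihx ihy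

lemma dvd_den_of_val_neg {p : ℕ} {x : ℚ} (h : padicValRat p x < 0) :
    p ∣ x.den := by
  by_contra hd
  rw [padicValRat_def, padicValNat.eq_zero_of_not_dvd hd] at h
  simp [padicValInt] at h
  omega

lemma hom_form (P₁ P₂ : Set ℕ) (hP₁ : ∀ p ∈ P₁, p.Prime) (hP₂ : ∀ p ∈ P₂, p.Prime)
    (hss : P₂ ⊂ P₁)
    (ψ : (↥(PRing P₁) × ↥(PRing P₂)) →+ (↥(PRing P₁) × ↥(PRing P₂)))
    (a : ↥(PRing P₁)) (b : ↥(PRing P₂)) :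
    ((ψ (a, b)).1 : ℚ) = ((ψ (1, 0)).1 : ℚ) * a + ((ψ (0, 1)).1 : ℚ) * b ∧
    ((ψ (a, b)).2 : ℚ) = ((ψ (0, 1)).2 : ℚ) * b := by
  have hadd1 : ∀ (u v : ↥(PRing P₁)),
      ((u + v : ↥(PRing P₁)), (0 : ↥(PRing P₂))) = (u, (0:↥(PRing P₂))) + (v, 0) := by
    intro u v; simp
  have hadd2 : ∀ (u v : ↥(PRing P₂)),
      ((0 : ↥(PRing P₁)), (u + v : ↥(PRing P₂))) = ((0:↥(PRing P₁)), u) + (0, v) := by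
    intro u v; simp
  let F11 : ↥(PRing P₁) →+ ℚ := AddMonoidHom.mk' (fun x => ((ψ (x, 0)).1 : ℚ))
    (by intro u v; rw [hadd1, map_add]; rfl)
  let F12 : ↥(PRing P₁) →+ ℚ := AddMonoidHom.mk' (fun x => ((ψ (x, 0)).2 : ℚ))
    (by intro u v; rw [hadd1, map_add]; rfl)
  let F21 : ↥(PRing P₂) →+ ℚ := AddMonoidHom.mk' (fun x => ((ψ (0, x)).1 : ℚ))
    (by intro u v; rw [hadd2, map_add]; rfl)
  let F22 : ↥(PRing P₂) →+ ℚ := AddMonoidHom.mk' (fun x => ((ψ (0, x)).2 : ℚ))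
    (by intro u v; rw [hadd2, map_add]; rfl)
  have h11 : ∀ x : ↥(PRing P₁), ((ψ (x, 0)).1 : ℚ) = (x : ℚ) * ((ψ (1, 0)).1 : ℚ) :=
    fun x => hom_eq_mul_one _ F11 x
  have h12 : ∀ x : ↥(PRing P₁), ((ψ (x, 0)).2 : ℚ) = (x : ℚ) * ((ψ (1, 0)).2 : ℚ) :=
    fun x => hom_eq_mul_one _ F12 x
  have h21 : ∀ x : ↥(PRing P₂), ((ψ (0, x)).1 : ℚ) = (x : ℚ) * ((ψ (0, 1)).1 : ℚ) :=
    fun x => hom_eq_mul_one _ F21 x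
  have h22 : ∀ x : ↥(PRing P₂), ((ψ (0, x)).2 : ℚ) = (x : ℚ) * ((ψ (0, 1)).2 : ℚ) :=
    fun x => hom_eq_mul_one _ F22 x
  -- the lower-left coefficient vanishes
  have hf0 : ((ψ (1, 0)).2 : ℚ) = 0 := by
    by_contra hf
    obtain ⟨p, hp1, hp2⟩ := Set.exists_of_ssubset hss
    have hpp := hP₁ p hp1
    haveI : Fact p.Prime := ⟨hpp⟩
    have hpq : ((p : ℚ)) ≠ 0 := by exact_mod_cast hpp.pos.ne'
    have hmem : ((p : ℚ)⁻¹) ∈ PRing P₁ := Subring.subset_closure ⟨p, hp1, rfl⟩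
    set f : ℚ := ((ψ (1, 0)).2 : ℚ) with hfdef
    set k : ℕ := (padicValRat p f).toNat + 1 with hkdef
    set x : ↥(PRing P₁) := ⟨(p : ℚ)⁻¹ ^ k, pow_mem hmem k⟩ with hxdef
    have hx : ((ψ (x, 0)).2 : ℚ) = (p : ℚ)⁻¹ ^ k * f := h12 x
    have hval : padicValRat p ((p : ℚ)⁻¹ ^ k * f) < 0 := by
      rw [padicValRat.mul (pow_ne_zero _ (inv_ne_zero hpq)) hf,
        padicValRat.pow _, padicValRat.inv, padicValRat.self hpp.one_lt]
      omega
    have hdvd : p ∣ ((ψ (x, 0)).2 : ℚ).den := dvd_den_of_val_neg (by rw [hx]; exact hval)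
    exact den_not_dvd P₂ hP₂ hpp hp2 (ψ (x, 0)).2.2 hdvd
  have hsplit : ((a, b) : ↥(PRing P₁) × ↥(PRing P₂)) = (a, 0) + (0, b) := by simp
  constructor
  · rw [hsplit, map_add, Prod.fst_add]
    push_cast
    rw [h11 a, h21 b]; ring
  · rw [hsplit, map_add, Prod.snd_add]
    push_cast
    rw [h12 a, h22 b, hf0]; ring

/-- Let `𝒫₂ ⊊ 𝒫₁` be sets of primes and `Cᵢ = ℤ[𝒫ᵢ⁻¹]`. Then every automorphism `φ` of the
additive group `C₁ × C₂` has the form `φ(a,b) = (c·a + e·b, d·b)` with `c` a unit of the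
ring `C₁`, `e ∈ C₁` and `d` a unit of the ring `C₂`. -/
theorem aut_prod_PRing_triangular (P₁ P₂ : Set ℕ)
    (hP₁ : ∀ p ∈ P₁, p.Prime) (hP₂ : ∀ p ∈ P₂, p.Prime) (hss : P₂ ⊂ P₁)
    (φ : (↥(PRing P₁) × ↥(PRing P₂)) ≃+ (↥(PRing P₁) × ↥(PRing P₂))) :
    ∃ (c e : ↥(PRing P₁)) (d : ↥(PRing P₂)), IsUnit c ∧ IsUnit d ∧
      ∀ (a : ↥(PRing P₁)) (b : ↥(PRing P₂)),
        ((φ (a, b)).1 : ℚ) = (c : ℚ) * (a : ℚ) + (e : ℚ) * (b : ℚ) ∧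
        ((φ (a, b)).2 : ℚ) = (d : ℚ) * (b : ℚ) := by
  have hφ := hom_form P₁ P₂ hP₁ hP₂ hss φ.toAddMonoidHom
  have hφ' := hom_form P₁ P₂ hP₁ hP₂ hss φ.symm.toAddMonoidHom
  simp only [AddEquiv.coe_toAddMonoidHom] at hφ hφ'
  set c := (φ (1, 0)).1 with hc
  set e := (φ (0, 1)).1 with he
  set d := (φ (0, 1)).2 with hd
  set c' := (φ.symm (1, 0)).1 with hc'
  set d' := (φ.symm (0, 1)).2 with hd'
  -- f = 0
  have hf0 : ((φ ((1 : ↥(PRing P₁)), (0 : ↥(PRing P₂)))).2 : ℚ) = 0 := by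
    have := (hφ 1 0).2
    simpa using this
  have hf0' : ((φ.symm ((1 : ↥(PRing P₁)), (0 : ↥(PRing P₂)))).2 : ℚ) = 0 := by
    have := (hφ' 1 0).2
    simpa using this
  -- c' * c = 1
  have hcc : (c' : ℚ) * (c : ℚ) = 1 := by
    have h1 : φ.symm (φ ((1 : ↥(PRing P₁)), (0 : ↥(PRing P₂)))) = (1, 0) :=
      φ.symm_apply_apply _
    have h2 := (hφ' (φ ((1 : ↥(PRing P₁)), (0 : ↥(PRing P₂)))).1 (φ (1, 0)).2).1
    rw [Prod.mk.eta, h1, hf0, mul_zero, add_zero] at h2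
    simpa using h2.symm
  have hdd : (d' : ℚ) * (d : ℚ) = 1 := by
    have h1 : φ.symm (φ ((0 : ↥(PRing P₁)), (1 : ↥(PRing P₂)))) = (0, 1) :=
      φ.symm_apply_apply _
    have h2 := (hφ' (φ ((0 : ↥(PRing P₁)), (1 : ↥(PRing P₂)))).1 (φ (0, 1)).2).2
    rw [Prod.mk.eta, h1] at h2
    simpa using h2.symm
  have hcunit : IsUnit c := IsUnit.of_mul_eq_one (a := c) c' (by
    ext; push_cast; rw [mul_comm]; exact hcc)
  have hdunit : IsUnit d := IsUnit.of_mul_eq_one (a := d) d' (by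
    ext; push_cast; rw [mul_comm]; exact hdd)
  exact ⟨c, e, d, hcunit, hdunit, fun a b => hφ a b⟩
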